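/- Let 0 < ε < t < 1, let n ≥ 2 and let i > n^{1-t+ε} with i < n. Let X = Σ_{j=i+1}^{n} I_j where I_j are independent Bernoulli with P(I_j=1) = 1/j. Then P(X > t·log n) ≤ exp(-(ε²/(2t))·log n) = n^{-ε²/(2t)}. -/

import Mathlib

open MeasureTheory ProbabilityTheory

private lemma exp_poly_aux {x : ℝ} (hx0 : 0 ≤ x) (hx1 : x ≤ 1) :
    (Real.exp x - 1) * (1 - x) ≤ x - x ^ 2 / 2 := by
  have h := Real.exp_bound' hx0 hx1 (n := 3) (by norm_num)
  have h' : Real.exp x ≤ 1 + x + x ^ 2 / 2 + (2 / 9) * x ^ 3 := by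
    calc Real.exp x ≤ ∑ m ∈ Finset.range 3, x ^ m / (m.factorial : ℝ) +
          x ^ 3 * ((3:ℕ) + 1) / (((3:ℕ).factorial : ℝ) * 3) := h
      _ = 1 + x + x ^ 2 / 2 + (2/9) * x ^ 3 := by
          norm_num [Finset.sum_range_succ, Nat.factorial]
          ring
  nlinarith [pow_nonneg hx0 3, pow_nonneg hx0 4, sq_nonneg x]

private lemma harmonic_sum_le {i : ℕ} (hi : 1 ≤ i) :
    ∀ n, i ≤ n → ∑ j ∈ Finset.Icc (i + 1) n, (1 : ℝ) / j ≤ Real.log n - Real.log i := by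
  intro n hn
  induction n with
  | zero => omega
  | succ m ih =>
    rcases Nat.lt_or_ge i (m + 1) with hlt | hge
    · have him : i ≤ m := by omega
      have hm1 : (1 : ℝ) ≤ m := by
        have : 1 ≤ m := by omega
        exact_mod_cast this
      have hstep : (1 : ℝ) / ((m : ℝ) + 1) ≤ Real.log ((m : ℝ) + 1) - Real.log m := by
        have hq : (0 : ℝ) < (m : ℝ) / ((m : ℝ) + 1) := by positivity
        have h2 := Real.log_le_sub_one_of_pos hq
        rw [Real.log_div (by positivity) (by positivity)] at h2
        have hid : (m : ℝ) / ((m : ℝ) + 1) - 1 = -(1 / ((m : ℝ) + 1)) := by field_simp; ring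
        linarith [hid ▸ h2]
      rw [Finset.sum_Icc_succ_top (by omega)]
      have hih := ih him
      push_cast
      push_cast at hih hstep
      linarith
    · have : m + 1 = i := by omega
      subst this
      simp

/-- Lemma 2.1: for `0 < ε < t < 1`, `n ≥ 2`, and `n^(1-t+ε) < i < n`, the sum
`X = Σ_{j=i+1}^n I_j` of independent Bernoulli indicators with `P(I_j = 1) = 1/j`
satisfies `P(X > t·log n) ≤ exp(-(ε²/(2t))·log n) = n^(-ε²/(2t))`. -/
theorem high_degree_upper_bound {Ω : Type*} [MeasurableSpace Ω] (μ : Measure Ω)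
    [IsProbabilityMeasure μ] (t ε : ℝ) (hε : 0 < ε) (hεt : ε < t) (ht : t < 1)
    (n i : ℕ) (hn : 2 ≤ n) (hi : (n : ℝ) ^ (1 - t + ε) < (i : ℝ)) (hin : i < n)
    (I : ℕ → Ω → ℝ) (hmeas : ∀ j, Measurable (I j))
    (hBer : ∀ j, ∀ᵐ ω ∂μ, I j ω = 0 ∨ I j ω = 1)
    (hP : ∀ j ∈ Finset.Icc (i + 1) n, μ {ω | I j ω = 1} = ENNReal.ofReal (1 / j))
    (hindep : iIndepFun I μ) :
    μ {ω | t * Real.log n < ∑ j ∈ Finset.Icc (i + 1) n, I j ω} ≤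
      ENNReal.ofReal (Real.exp (-(ε ^ 2 / (2 * t)) * Real.log n)) ∧
    Real.exp (-(ε ^ 2 / (2 * t)) * Real.log n) = (n : ℝ) ^ (-(ε ^ 2 / (2 * t))) := by
  have ht0 : 0 < t := hε.trans hεt
  have hn1 : (1 : ℝ) < n := by exact_mod_cast hn.trans_lt' one_lt_two
  have hnpos : (0 : ℝ) < n := by linarith
  have hlogn : 0 < Real.log n := Real.log_pos hn1
  -- i ≥ 1
  have hi1 : (1 : ℝ) < i := by
    refine lt_trans ?_ hi
    rw [show (1:ℝ) < (n:ℝ) ^ (1 - t + ε) ↔ _ from Real.one_lt_rpow_iff hnpos.le]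
    left
    exact ⟨hn1, by linarith⟩
  have hi1' : 1 ≤ i := by
    by_contra h
    push_neg at h
    interval_cases i <;> norm_num at hi1
  have hipos : (0 : ℝ) < i := by linarith
  -- log i ≥ (1-t+ε) log n
  have hlogi : (1 - t + ε) * Real.log n ≤ Real.log i := by
    have := Real.log_le_log (by positivity) hi.le
    rwa [Real.log_rpow hnpos] at this
  -- harmonic sum bound
  have hharm : ∑ j ∈ Finset.Icc (i + 1) n, (1 : ℝ) / j ≤ (t - ε) * Real.log n := by
    have h1 := harmonic_sum_le hi1' n hin.le
    nlinarith
  -- Chernoff parameter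
  set l : ℝ := ε / t with hl
  have hl0 : 0 < l := by positivity
  have hl1 : l < 1 := (div_lt_one ht0).mpr hεt
  have hel1 : (1 : ℝ) ≤ Real.exp l := by
    rw [← Real.exp_zero]
    exact Real.exp_le_exp.mpr hl0.le
  set c : ℝ := Real.exp l - 1 with hc
  have hc0 : 0 ≤ c := by linarith
  set s : Finset ℕ := Finset.Icc (i + 1) n with hs
  set X : Ω → ℝ := fun ω => ∑ j ∈ s, I j ω with hX
  have hXeq : (∑ j ∈ s, I j) = X := by
    ext ω; simp [hX, Finset.sum_apply]
  have hXmeas : Measurable X := by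
    apply Finset.measurable_sum
    exact fun j _ => hmeas j
  -- mgf of each indicator
  have hmgf : ∀ j ∈ s, mgf (I j) μ l = 1 + c * (1 / j) := by
    intro j hj
    have hjpos : 0 < j := by
      simp only [hs, Finset.mem_Icc] at hj
      omega
    have hA : MeasurableSet {ω | I j ω = 1} :=
      (hmeas j) (measurableSet_singleton 1)
    have hae : (fun ω => Real.exp (l * I j ω)) =ᵐ[μ]
        fun ω => 1 + c * ({ω | I j ω = 1}).indicator (fun _ => (1:ℝ)) ω := by
      filter_upwards [hBer j] with ω hω
      rcases hω with h0 | h1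
      · have : ω ∉ {ω | I j ω = 1} := by simp [Set.mem_setOf_eq, h0]
        simp [h0, Set.indicator_of_notMem this]
      · have : ω ∈ {ω | I j ω = 1} := h1
        simp [h1, Set.indicator_of_mem this, hc]
    rw [mgf, integral_congr_ae hae]
    have hind : Integrable (({ω | I j ω = 1}).indicator (fun _ => (1:ℝ))) μ :=
      (integrable_const (1:ℝ)).indicator hA
    rw [integral_add (integrable_const 1) (hind.const_mul c)]
    rw [integral_const, integral_const_mul, integral_indicator_const (1:ℝ) hA,
      measureReal_def, measureReal_def, hP j (hs ▸ hj)]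
    have : (ENNReal.ofReal (1 / (j:ℝ))).toReal = 1 / (j:ℝ) :=
      ENNReal.toReal_ofReal (by positivity)
    simp [this]
  -- integrability of exp(l * X)
  have hint : Integrable (fun ω => Real.exp (l * X ω)) μ := by
    refine Integrable.mono' (integrable_const (Real.exp (l * s.card)))
      ((hXmeas.const_mul l).exp.aestronglyMeasurable) ?_
    have hae : ∀ᵐ ω ∂μ, ∀ j ∈ s, I j ω = 0 ∨ I j ω = 1 := by
      rw [Filter.eventually_all_finset]
      exact fun j _ => hBer j
    filter_upwards [hae] with ω hω
    rw [Real.norm_eq_abs, abs_of_pos (Real.exp_pos _), Real.exp_le_exp]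
    have hXle : X ω ≤ s.card := by
      calc X ω ≤ ∑ j ∈ s, (1:ℝ) := by
            apply Finset.sum_le_sum
            intro j hj
            rcases hω j hj with h | h <;> simp [h]
        _ = s.card := by simp
    exact mul_le_mul_of_nonneg_left hXle hl0.le
  -- Chernoff bound
  have hcher := measure_ge_le_exp_mul_mgf (μ := μ) (X := X) (t := l)
    (t * Real.log n) hl0.le hint
  -- factor the mgf
  have hmgfX : mgf X μ l = ∏ j ∈ s, mgf (I j) μ l := by
    rw [← hXeq]
    exact hindep.mgf_sum hmeas s
  -- bound the product
  have hprod : ∏ j ∈ s, mgf (I j) μ l ≤ Real.exp (c * ((t - ε) * Real.log n)) := by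
    calc ∏ j ∈ s, mgf (I j) μ l = ∏ j ∈ s, (1 + c * (1 / j)) :=
          Finset.prod_congr rfl hmgf
      _ ≤ ∏ j ∈ s, Real.exp (c * (1 / j)) := by
          apply Finset.prod_le_prod
          · intro j hj
            have hjpos : 0 < j := by
              simp only [hs, Finset.mem_Icc] at hj; omega
            have : (0:ℝ) < j := by exact_mod_cast hjpos
            positivity
          · intro j hj
            have := Real.add_one_le_exp (c * (1 / j))
            linarith
      _ = Real.exp (∑ j ∈ s, c * (1 / j)) := (Real.exp_sum s _).symm
      _ = Real.exp (c * ∑ j ∈ s, (1 / (j:ℝ))) := by rw [Finset.mul_sum]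
      _ ≤ Real.exp (c * ((t - ε) * Real.log n)) := by
          apply Real.exp_le_exp.mpr
          exact mul_le_mul_of_nonneg_left hharm hc0
  -- key exponent inequality
  have hexp : Real.exp (-l * (t * Real.log n)) * Real.exp (c * ((t - ε) * Real.log n))
      ≤ Real.exp (-(ε ^ 2 / (2 * t)) * Real.log n) := by
    rw [← Real.exp_add, Real.exp_le_exp]
    have hkey : (Real.exp l - 1) * (1 - l) ≤ l - l ^ 2 / 2 :=
      exp_poly_aux hl0.le hl1.le
    have h1 : c * (t - ε) ≤ ε - ε ^ 2 / (2 * t) := by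
      have ht1 : t * (1 - l) = t - ε := by rw [hl]; field_simp
      have ht2 : t * l = ε := by rw [hl]; field_simp
      have ht3 : t * (l ^ 2 / 2) = ε ^ 2 / (2 * t) := by
        rw [hl]
        field_simp
      have := mul_le_mul_of_nonneg_left hkey ht0.le
      calc c * (t - ε) = t * ((Real.exp l - 1) * (1 - l)) := by rw [← ht1]; ring
        _ ≤ t * (l - l ^ 2 / 2) := this
        _ = ε - ε ^ 2 / (2 * t) := by rw [mul_sub, ht2, ht3]
    have hlt : -l * (t * Real.log n) = -(ε * Real.log n) := by
      rw [hl]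
      field_simp
    rw [hlt]
    nlinarith [mul_le_mul_of_nonneg_right h1 hlogn.le]
  -- assemble
  constructor
  · have hsub : μ {ω | t * Real.log n < ∑ j ∈ s, I j ω} ≤
        μ {ω | t * Real.log n ≤ X ω} := by
      apply measure_mono
      intro ω hω
      simp only [Set.mem_setOf_eq] at hω ⊢
      exact le_of_lt hω
    refine le_trans hsub ?_
    rw [ENNReal.le_ofReal_iff_toReal_le (measure_ne_top μ _) (Real.exp_nonneg _)]
    calc (μ {ω | t * Real.log n ≤ X ω}).toReal
        ≤ Real.exp (-l * (t * Real.log n)) * mgf X μ l := hcher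
      _ ≤ Real.exp (-l * (t * Real.log n)) * Real.exp (c * ((t - ε) * Real.log n)) := by
          rw [hmgfX]
          exact mul_le_mul_of_nonneg_left hprod (Real.exp_nonneg _)
      _ ≤ Real.exp (-(ε ^ 2 / (2 * t)) * Real.log n) := hexp
  · rw [Real.rpow_def_of_pos hnpos]
    ring_nf
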